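/- The number of Catalan-Bertrand strings of length i equals binomial(i-1, (i-1)/2) if i is odd, and equals (1/2) * binomial(i, i/2) if i ≥ 2 is even. -/

import Mathlib

/-- A Catalan-Bertrand string: every nonempty prefix has strictly more 0s than 1s. -/
def CatalanBertrand (u : List Bool) : Prop :=
  ∀ k, 1 ≤ k → k ≤ u.length → (u.take k).count true < (u.take k).count false

open Finset

lemma cb_nil : CatalanBertrand [] := by
  intro k hk hk2; simp at hk2; omega

lemma cb_count_le {u : List Bool} (h : CatalanBertrand u) :
    u.count true ≤ u.count false := by
  rcases u with _ | ⟨a, v⟩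
  · simp
  · have := h (a :: v).length (by simp) le_rfl
    rw [List.take_length] at this
    omega

lemma count_true_add_count_false (u : List Bool) :
    u.count true + u.count false = u.length := by
  induction u with
  | nil => simp
  | cons a v ih => cases a <;> simp [List.count_cons] <;> omega

lemma cb_append_singleton (u : List Bool) (b : Bool) :
    CatalanBertrand (u ++ [b]) ↔ CatalanBertrand u ∧
      (u ++ [b]).count true < (u ++ [b]).count false := by
  constructor
  · intro h
    refine ⟨fun k hk1 hk2 => ?_, ?_⟩
    · have := h k hk1 (by simp; omega)
      rwa [List.take_append_of_le_length hk2] at this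
    · have := h (u.length + 1) (by omega) (by simp)
      rwa [List.take_of_length_le (by simp)] at this
  · rintro ⟨h1, h2⟩ k hk1 hk2
    simp at hk2
    rcases Nat.lt_or_ge k (u.length + 1) with hk | hk
    · rw [List.take_append_of_le_length (by omega)]
      exact h1 k hk1 (by omega)
    · rw [List.take_of_length_le (by simp; omega)]
      exact h2

/-- All boolean lists of length `n`. -/
def allB (n : ℕ) : Finset (List Bool) :=
  (Finset.univ : Finset (Fin n → Bool)).image List.ofFn

lemma mem_allB {n : ℕ} {u : List Bool} : u ∈ allB n ↔ u.length = n := by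
  simp only [allB, Finset.mem_image, Finset.mem_univ, true_and]
  constructor
  · rintro ⟨f, rfl⟩; simp
  · rintro rfl; exact ⟨u.get, List.ofFn_get u⟩

open Classical in
/-- Valid strings of length `n` whose number of `false`s exceeds the number of
`true`s by exactly `d`. -/
noncomputable def S (n d : ℕ) : Finset (List Bool) :=
  (allB n).filter (fun u => CatalanBertrand u ∧ u.count false = u.count true + d)

lemma mem_S {n d : ℕ} {u : List Bool} :
    u ∈ S n d ↔ u.length = n ∧ CatalanBertrand u ∧
      u.count false = u.count true + d := by
  simp only [S, Finset.mem_filter, mem_allB]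
  try tauto

lemma card_S_zero_zero : (S 0 0).card = 1 := by
  have : S 0 0 = {[]} := by
    ext u
    simp only [mem_S, Finset.mem_singleton, List.length_eq_zero_iff]
    constructor
    · rintro ⟨rfl, _, _⟩; rfl
    · rintro rfl; exact ⟨rfl, cb_nil, rfl⟩
  rw [this, Finset.card_singleton]

lemma card_S_zero_succ (d : ℕ) : (S 0 (d + 1)).card = 0 := by
  rw [Finset.card_eq_zero, Finset.eq_empty_iff_forall_notMem]
  intro u hu
  rw [mem_S, List.length_eq_zero_iff] at hu
  obtain ⟨rfl, _, h⟩ := hu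
  simp at h

lemma card_S_succ_zero (n : ℕ) : (S (n + 1) 0).card = 0 := by
  rw [Finset.card_eq_zero, Finset.eq_empty_iff_forall_notMem]
  intro u hu
  rw [mem_S] at hu
  obtain ⟨hl, hcb, hc⟩ := hu
  have := hcb (n + 1) (by omega) (by omega)
  rw [List.take_of_length_le (by omega)] at this
  omega

lemma card_S_pos_zero {n : ℕ} (h : 1 ≤ n) : (S n 0).card = 0 := by
  obtain ⟨m, rfl⟩ : ∃ m, n = m + 1 := ⟨n - 1, by omega⟩
  exact card_S_succ_zero m

lemma card_S_of_lt {n d : ℕ} (h : n < d) : (S n d).card = 0 := by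
  rw [Finset.card_eq_zero, Finset.eq_empty_iff_forall_notMem]
  intro u hu
  rw [mem_S] at hu
  obtain ⟨hl, hcb, hc⟩ := hu
  have := List.count_le_length (a := false) (l := u)
  omega

lemma card_S_parity {n d : ℕ} (h : (n + d) % 2 = 1) : (S n d).card = 0 := by
  rw [Finset.card_eq_zero, Finset.eq_empty_iff_forall_notMem]
  intro u hu
  rw [mem_S] at hu
  obtain ⟨hl, hcb, hc⟩ := hu
  have := count_true_add_count_false u
  omega

lemma card_S_succ (n d : ℕ) :
    (S (n + 1) (d + 1)).card = (S n d).card + (S n (d + 2)).card := by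
  have hset : S (n + 1) (d + 1) =
      (S n d).image (· ++ [false]) ∪ (S n (d + 2)).image (· ++ [true]) := by
    ext u
    simp only [Finset.mem_union, Finset.mem_image, mem_S]
    constructor
    · rintro ⟨hl, hcb, hc⟩
      have hne : u ≠ [] := by intro h; subst h; simp at hl
      obtain ⟨v, b, rfl⟩ : ∃ v b, u = v ++ [b] :=
        ⟨u.dropLast, u.getLast hne, (List.dropLast_append_getLast hne).symm⟩
      have hcb' := (cb_append_singleton v b).mp hcb
      simp only [List.length_append, List.length_singleton] at hl
      cases b
      · left
        refine ⟨v, ⟨by omega, hcb'.1, ?_⟩, rfl⟩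
        simp [List.count_append] at hc ⊢
        omega
      · right
        refine ⟨v, ⟨by omega, hcb'.1, ?_⟩, rfl⟩
        simp [List.count_append] at hc ⊢
        omega
    · rintro (⟨v, ⟨hl, hcb, hc⟩, rfl⟩ | ⟨v, ⟨hl, hcb, hc⟩, rfl⟩)
      · refine ⟨by simp [hl], (cb_append_singleton v false).mpr ⟨hcb, ?_⟩, ?_⟩
        · simp [List.count_append]; omega
        · simp [List.count_append]; omega
      · refine ⟨by simp [hl], (cb_append_singleton v true).mpr ⟨hcb, ?_⟩, ?_⟩
        · simp [List.count_append]; omega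
        · simp [List.count_append]; omega
  have hdisj : Disjoint ((S n d).image (· ++ [false]))
      ((S n (d + 2)).image (· ++ [true])) := by
    rw [Finset.disjoint_left]
    rintro u hu1 hu2
    simp only [Finset.mem_image] at hu1 hu2
    obtain ⟨v, _, rfl⟩ := hu1
    obtain ⟨w, _, heq⟩ := hu2
    have := (List.append_inj' heq rfl).2
    simp at this
  rw [hset, Finset.card_union_of_disjoint hdisj,
    Finset.card_image_of_injective _ (List.append_left_injective [false]),
    Finset.card_image_of_injective _ (List.append_left_injective [true])]

/-- `choose` with an integer lower index, zero for negative index. -/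
def ch (m : ℕ) (k : ℤ) : ℤ := if 0 ≤ k then (m.choose k.toNat : ℤ) else 0

lemma ch_coe (m q : ℕ) : ch m (q : ℤ) = (m.choose q : ℤ) := by
  simp [ch]

lemma ch_neg_one (m : ℕ) : ch m (-1) = 0 := by simp [ch]

lemma ch_pascal (m : ℕ) (k : ℤ) : ch (m + 1) k = ch m k + ch m (k - 1) := by
  rcases Int.lt_or_le k 0 with h | h
  · have h1 : k - 1 < 0 := by omega
    simp [ch, not_le.mpr h, not_le.mpr h1]
    intro; omega
  · lift k to ℕ using h with q
    cases q with
    | zero =>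
      norm_num [ch]
    | succ p =>
      have h1 : ((p + 1 : ℕ) : ℤ) - 1 = (p : ℤ) := by push_cast; ring
      rw [h1, ch_coe, ch_coe, ch_coe, Nat.choose_succ_succ]
      push_cast; ring

lemma g_closed : ∀ n d q : ℕ, n = d + 2 * q → 1 ≤ d →
    ((S n d).card : ℤ) = ch (n - 1) (q : ℤ) - ch (n - 1) ((q : ℤ) - 1) := by
  intro n
  induction n with
  | zero => intro d q h hd; omega
  | succ n ih =>
    intro d' q h hd'
    obtain ⟨d, rfl⟩ : ∃ d, d' = d + 1 := ⟨d' - 1, by omega⟩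
    rw [card_S_succ]
    push_cast
    try simp only [Nat.add_sub_cancel]
    rcases Nat.eq_zero_or_pos d with rfl | hd
    · -- d' = 1, n = 2q
      rcases Nat.eq_zero_or_pos q with rfl | hq
      · -- n = 0
        have hn : n = 0 := by omega
        subst hn
        rw [card_S_zero_zero, card_S_of_lt (by omega)]
        norm_num [ch]
      · obtain ⟨p, rfl⟩ : ∃ p, q = p + 1 := ⟨q - 1, by omega⟩
        obtain ⟨m, rfl⟩ : ∃ m, n = m + 1 := ⟨n - 1, by omega⟩
        have h2 : ((S (m+1) 2).card : ℤ) = ch m (p : ℤ) - ch m ((p:ℤ) - 1) := by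
          have := ih 2 p (by omega) (by omega)
          simpa using this
        have h0 : ((S (m+1) 0).card : ℤ) = 0 := by
          rw [card_S_pos_zero (by omega)]; norm_num
        rw [h0, h2]
        push_cast
        have hsymm : ch m ((p:ℤ)+1) = ch m (p : ℤ) := by
          have hm : m = 2 * p + 1 := by omega
          rw [show ((p:ℤ)+1) = ((p+1 : ℕ) : ℤ) by push_cast; ring, ch_coe, ch_coe]
          have hs := Nat.choose_symm (show p + 1 ≤ m by omega)
          rw [show m - (p + 1) = p by omega] at hs
          rw [hs]
        rw [show (p:ℤ) + 1 - 1 = (p:ℤ) by ring]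
        rw [ch_pascal m ((p:ℤ)+1), ch_pascal m (p:ℤ)]
        rw [show (p:ℤ) + 1 - 1 = (p:ℤ) by ring, hsymm]
        ring
    · -- d ≥ 1
      rcases Nat.eq_zero_or_pos q with rfl | hq
      · -- q = 0, n = d
        obtain ⟨m, rfl⟩ : ∃ m, n = m + 1 := ⟨n - 1, by omega⟩
        have h2 : ((S (m+1) (d+2)).card : ℤ) = 0 := by
          rw [card_S_of_lt (by omega)]; norm_num
        have h1 : ((S (m+1) d).card : ℤ) = ch m ((0:ℕ) : ℤ) - ch m (((0:ℕ):ℤ) - 1) := by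
          have := ih d 0 (by omega) hd
          simpa using this
        rw [h1, h2]
        push_cast
        rw [ch_pascal m 0]
        norm_num [ch_neg_one]
      · obtain ⟨p, rfl⟩ : ∃ p, q = p + 1 := ⟨q - 1, by omega⟩
        obtain ⟨m, rfl⟩ : ∃ m, n = m + 1 := ⟨n - 1, by omega⟩
        have h1 : ((S (m+1) d).card : ℤ)
            = ch m ((p:ℤ)+1) - ch m ((p:ℤ)+1-1) := by
          have := ih d (p+1) (by omega) hd
          simpa using this
        have h2 : ((S (m+1) (d+2)).card : ℤ) = ch m (p:ℤ) - ch m ((p:ℤ)-1) := by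
          have := ih (d+2) p (by omega) (by omega)
          simpa using this
        rw [h1, h2]
        push_cast
        rw [show (p:ℤ) + 1 - 1 = (p:ℤ) by ring]
        rw [ch_pascal m ((p:ℤ)+1), ch_pascal m (p:ℤ)]
        rw [show (p:ℤ) + 1 - 1 = (p:ℤ) by ring]
        ring

open Classical in
/-- Number of Catalan-Bertrand strings of length `n`. -/
noncomputable def F (n : ℕ) : ℕ := ((allB n).filter CatalanBertrand).card

lemma F_eq_sum (n : ℕ) :
    F n = ∑ d ∈ Finset.range (n + 1), (S n d).card := by
  classical
  rw [F]
  rw [Finset.card_eq_sum_card_fiberwise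
    (f := fun u => u.count false - u.count true) (t := Finset.range (n + 1))
    (fun u hu => by
      simp only [Finset.mem_coe, Finset.mem_filter] at hu
      have := List.count_le_length (a := false) (l := u)
      rw [mem_allB] at hu
      simp only [Finset.mem_coe, Finset.mem_range]
      omega)]
  apply Finset.sum_congr rfl
  intro d _
  congr 1
  ext u
  simp only [Finset.mem_filter, mem_allB, mem_S]
  constructor
  · rintro ⟨⟨hl, hcb⟩, hc⟩
    have := cb_count_le hcb
    exact ⟨hl, hcb, by omega⟩
  · rintro ⟨hl, hcb, hc⟩
    exact ⟨⟨hl, hcb⟩, by omega⟩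

lemma F_succ (n : ℕ) :
    F (n + 1) + (S n 0).card + (S n 1).card = 2 * F n := by
  rw [F_eq_sum (n+1), F_eq_sum n]
  have hz : (S (n+1) 0).card = 0 := card_S_succ_zero n
  have e0 : ∑ d ∈ Finset.range (n+1+1), (S (n+1) d).card
      = (∑ d ∈ Finset.range (n+1), (S (n+1) (d+1)).card) + (S (n+1) 0).card :=
    Finset.sum_range_succ' (fun d => (S (n+1) d).card) (n+1)
  have e1 : (∑ d ∈ Finset.range (n+1), (S (n+1) (d+1)).card)
      = (∑ d ∈ Finset.range (n+1), (S n d).card)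
        + (∑ d ∈ Finset.range (n+1), (S n (d+2)).card) := by
    rw [← Finset.sum_add_distrib]
    exact Finset.sum_congr rfl (fun d _ => card_S_succ n d)
  have e2 : ∑ d ∈ Finset.range (n+3), (S n d).card
      = (∑ d ∈ Finset.range (n+2), (S n (d+1)).card) + (S n 0).card :=
    Finset.sum_range_succ' (fun d => (S n d).card) (n+2)
  have e3 : (∑ d ∈ Finset.range (n+2), (S n (d+1)).card)
      = (∑ d ∈ Finset.range (n+1), (S n (d+2)).card) + (S n 1).card :=
    Finset.sum_range_succ' (fun d => (S n (d+1)).card) (n+1)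
  have e4 : ∑ d ∈ Finset.range (n+3), (S n d).card
      = (∑ d ∈ Finset.range (n+2), (S n d).card) + (S n (n+2)).card :=
    Finset.sum_range_succ (fun d => (S n d).card) (n+2)
  have e5 : ∑ d ∈ Finset.range (n+2), (S n d).card
      = (∑ d ∈ Finset.range (n+1), (S n d).card) + (S n (n+1)).card :=
    Finset.sum_range_succ (fun d => (S n d).card) (n+1)
  have e6 : (S n (n+2)).card = 0 := card_S_of_lt (by omega)
  have e7 : (S n (n+1)).card = 0 := card_S_of_lt (by omega)
  omega

lemma F_vals : ∀ k : ℕ, F (2*k+1) = (2*k).choose k ∧ F (2*k+2) = (2*k+1).choose k := by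
  have hF0 : F 0 = 1 := by
    rw [F_eq_sum]; simp [card_S_zero_zero]
  have hF1 : F 1 = 1 := by
    have h : F 1 + (S 0 0).card + (S 0 1).card = 2 * F 0 := F_succ 0
    rw [hF0, card_S_zero_zero, card_S_zero_succ 0] at h
    omega
  have hg11 : (S 1 1).card = 1 := by
    have h := g_closed 1 1 0 (by norm_num) (by norm_num)
    norm_num [ch] at h
    exact_mod_cast h
  have hF2 : F 2 = 1 := by
    have h : F 2 + (S 1 0).card + (S 1 1).card = 2 * F 1 := F_succ 1
    rw [hF1, card_S_pos_zero (by omega)] at h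
    omega
  intro k
  induction k with
  | zero =>
    constructor
    · norm_num [hF1]
    · norm_num [hF2]
  | succ k ih =>
    obtain ⟨ih1, ih2⟩ := ih
    have step1 : F (2*k+3) = (2*k+2).choose (k+1) := by
      have h : F (2*k+3) + (S (2*k+2) 0).card + (S (2*k+2) 1).card
          = 2 * F (2*k+2) := F_succ (2*k+2)
      rw [card_S_pos_zero (by omega), card_S_parity (by omega), ih2] at h
      have hch : (2*k+2).choose (k+1) = (2*k+1).choose k + (2*k+1).choose (k+1) :=
        Nat.choose_succ_succ (2*k+1) k
      have hsym : (2*k+1).choose (k+1) = (2*k+1).choose k := by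
        have hs := Nat.choose_symm (show k + 1 ≤ 2*k+1 by omega)
        rw [show 2*k+1 - (k+1) = k by omega] at hs
        omega
      omega
    have hg : ((S (2*k+3) 1).card : ℤ)
        = ((2*k+2).choose (k+1) : ℤ) - ((2*k+2).choose k : ℤ) := by
      have h := g_closed (2*k+3) 1 (k+1) (by omega) (by omega)
      rw [show 2*k+3 - 1 = 2*k+2 by omega] at h
      rw [show ((k+1:ℕ):ℤ) - 1 = ((k:ℕ):ℤ) by push_cast; ring] at h
      rw [ch_coe, ch_coe] at h
      exact h
    have step2 : F (2*k+4) = (2*k+3).choose (k+1) := by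
      have h : F (2*k+4) + (S (2*k+3) 0).card + (S (2*k+3) 1).card
          = 2 * F (2*k+3) := F_succ (2*k+3)
      rw [card_S_pos_zero (by omega), step1] at h
      have hch : (2*k+3).choose (k+1) = (2*k+2).choose k + (2*k+2).choose (k+1) :=
        Nat.choose_succ_succ (2*k+2) k
      omega
    constructor
    · rw [show 2*(k+1)+1 = 2*k+3 by ring, show 2*(k+1) = 2*k+2 by ring]
      exact step1
    · rw [show 2*(k+1)+2 = 2*k+4 by ring, show 2*(k+1)+1 = 2*k+3 by ring]
      exact step2

lemma ncard_eq_F (n : ℕ) :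
    {u : List Bool | u.length = n ∧ CatalanBertrand u}.ncard = F n := by
  classical
  have : {u : List Bool | u.length = n ∧ CatalanBertrand u}
      = ↑((allB n).filter CatalanBertrand) := by
    ext u
    simp [mem_allB, Set.mem_setOf_eq]
  rw [this, Set.ncard_coe_finset]
  rfl

theorem card_catalanBertrand (i : ℕ) :
    (Odd i → {u : List Bool | u.length = i ∧ CatalanBertrand u}.ncard =
        (i - 1).choose ((i - 1) / 2)) ∧
    (Even i → 2 ≤ i → {u : List Bool | u.length = i ∧ CatalanBertrand u}.ncard =
        i.choose (i / 2) / 2) := by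
  constructor
  · rintro ⟨k, rfl⟩
    rw [ncard_eq_F, (F_vals k).1]
    congr 1
    omega
  · rintro ⟨m, rfl⟩ h2
    obtain ⟨k, rfl⟩ : ∃ k, m = k + 1 := ⟨m - 1, by omega⟩
    have hlen : (k+1) + (k+1) = 2*k+2 := by ring
    rw [hlen, ncard_eq_F, (F_vals k).2]
    have hch : (2*k+2).choose (k+1) = 2 * (2*k+1).choose k := by
      have h1 : (2*k+2).choose (k+1) = (2*k+1).choose k + (2*k+1).choose (k+1) :=
        Nat.choose_succ_succ (2*k+1) k
      have h2 : (2*k+1).choose (k+1) = (2*k+1).choose k := by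
        have hs := Nat.choose_symm (show k + 1 ≤ 2*k+1 by omega)
        rw [show 2*k+1 - (k+1) = k by omega] at hs
        omega
      omega
    have hdiv : (2*k+2)/2 = k+1 := by omega
    rw [hdiv, hch]
    omega
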